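/- Let p ≥ 3, let G be a partition of {1,…,p}, and let Σ, Σ̂ be p×p real matrices such that COD_Σ(a,b) = 0 whenever a ∼ b. Let δ ≥ ‖Σ̂ − Σ‖_max. Then: (i) for all a ∼ b, COD_{Σ̂}(a,b) ≤ 2δ; (ii) for all a ≁ b, COD_{Σ̂}(a,b) ≥ MCOD(Σ) − 2δ. In particular, if MCOD(Σ) > 4δ, then thresholding at α = 2δ exactly recovers the partition: a ∼ b if and only if COD_{Σ̂}(a,b) ≤ α, for all a ≠ b. -/
import Mathlib


open Matrix BigOperators

noncomputable section

/-- `COD_Σ(a,b) = max_{c ≠ a,b} |Σ_{ac} − Σ_{bc}|`. -/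
def COD {p : ℕ} (S : Matrix (Fin p) (Fin p) ℝ) (a b : Fin p) : ℝ :=
  ⨆ c : Fin p, ⨆ _ : c ≠ a ∧ c ≠ b, |S a c - S b c|

/-- `MCOD(Σ) = min_{a ≁ b} COD_Σ(a,b)`. -/
def MCOD {p : ℕ} (r : Fin p → Fin p → Prop) (S : Matrix (Fin p) (Fin p) ℝ) : ℝ :=
  ⨅ ab : {ab : Fin p × Fin p // ¬ r ab.1 ab.2}, COD S ab.1.1 ab.1.2

/-- Entrywise maximum norm `‖M‖_max`. -/
def maxNorm {p q : ℕ} (M : Matrix (Fin p) (Fin q) ℝ) : ℝ := ⨆ i, ⨆ j, |M i j|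

lemma cod_nonneg {p : ℕ} (S : Matrix (Fin p) (Fin p) ℝ) (a b : Fin p) : 0 ≤ COD S a b :=
  Real.iSup_nonneg fun _ => Real.iSup_nonneg fun _ => abs_nonneg _

lemma le_cod {p : ℕ} (S : Matrix (Fin p) (Fin p) ℝ) {a b c : Fin p} (h : c ≠ a ∧ c ≠ b) :
    |S a c - S b c| ≤ COD S a b := by
  have h1 : |S a c - S b c| = ⨆ _ : c ≠ a ∧ c ≠ b, |S a c - S b c| :=
    (ciSup_pos (f := fun _ => |S a c - S b c|) h).symm
  rw [h1, COD]
  exact le_ciSup (f := fun c => ⨆ _ : c ≠ a ∧ c ≠ b, |S a c - S b c|)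
    (Set.Finite.bddAbove (Set.finite_range _)) c

lemma entry_le_maxNorm {p q : ℕ} (M : Matrix (Fin p) (Fin q) ℝ) (i : Fin p) (j : Fin q) :
    |M i j| ≤ maxNorm M :=
  (le_ciSup (Set.Finite.bddAbove (Set.finite_range _)) j).trans
    (le_ciSup (Set.Finite.bddAbove (Set.finite_range fun i => ⨆ j, |M i j|)) i)

lemma cod_pert {p : ℕ} {S Shat : Matrix (Fin p) (Fin p) ℝ} {δ : ℝ}
    (hent : ∀ i j, |Shat i j - S i j| ≤ δ) (hδ0 : 0 ≤ δ) (a b : Fin p) :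
    COD Shat a b ≤ COD S a b + 2 * δ := by
  have hS := cod_nonneg S a b
  refine Real.iSup_le (fun c => Real.iSup_le (fun h => ?_) (by linarith)) (by linarith)
  have hc := le_cod S h
  have e1 := hent a c
  have e2 := hent b c
  have key : |Shat a c - Shat b c| ≤ |S a c - S b c| + (|Shat a c - S a c| + |Shat b c - S b c|) := by
    have hrw : Shat a c - Shat b c = (S a c - S b c) + ((Shat a c - S a c) - (Shat b c - S b c)) := by
      ring
    calc |Shat a c - Shat b c| ≤ |S a c - S b c| + |(Shat a c - S a c) - (Shat b c - S b c)| := by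
          rw [hrw]; exact abs_add_le _ _
      _ ≤ _ := by have := abs_sub (Shat a c - S a c) (Shat b c - S b c); linarith
  linarith

theorem cod_threshold_recovery
    {p : ℕ} (hp : 3 ≤ p) (G : Setoid (Fin p)) (S Shat : Matrix (Fin p) (Fin p) ℝ)
    (hzero : ∀ a b : Fin p, G.r a b → COD S a b = 0)
    (δ : ℝ) (hδ : maxNorm (Shat - S) ≤ δ) :
    (∀ a b : Fin p, G.r a b → COD Shat a b ≤ 2 * δ) ∧
    (∀ a b : Fin p, ¬ G.r a b →
        MCOD (fun x y => G.r x y) S - 2 * δ ≤ COD Shat a b) ∧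
    (4 * δ < MCOD (fun x y => G.r x y) S →
        ∀ a b : Fin p, a ≠ b → (G.r a b ↔ COD Shat a b ≤ 2 * δ)) := by
  have hδ0 : 0 ≤ δ :=
    le_trans (Real.iSup_nonneg fun _ => Real.iSup_nonneg fun _ => abs_nonneg _) hδ
  have hent : ∀ i j, |Shat i j - S i j| ≤ δ := by
    intro i j
    have := entry_le_maxNorm (Shat - S) i j
    simpa [Matrix.sub_apply] using this.trans hδ
  have hent' : ∀ i j, |S i j - Shat i j| ≤ δ := fun i j => by
    rw [abs_sub_comm]; exact hent i j
  have h1 : ∀ a b, COD Shat a b ≤ COD S a b + 2 * δ := cod_pert hent hδ0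
  have h2 : ∀ a b, COD S a b ≤ COD Shat a b + 2 * δ := cod_pert hent' hδ0
  have hi : ∀ a b : Fin p, G.r a b → COD Shat a b ≤ 2 * δ := by
    intro a b hab
    have := h1 a b
    rw [hzero a b hab] at this
    linarith
  have hii : ∀ a b : Fin p, ¬ G.r a b →
      MCOD (fun x y => G.r x y) S - 2 * δ ≤ COD Shat a b := by
    intro a b hab
    have hm : MCOD (fun x y => G.r x y) S ≤ COD S a b := by
      have : BddBelow (Set.range fun ab : {ab : Fin p × Fin p // ¬ G.r ab.1 ab.2} =>
          COD S ab.1.1 ab.1.2) :=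
        ⟨0, by rintro x ⟨ab, rfl⟩; exact cod_nonneg _ _ _⟩
      exact ciInf_le this ⟨(a, b), hab⟩
    have := h2 a b
    linarith
  refine ⟨hi, hii, fun hM a b _ => ⟨hi a b, fun hle => ?_⟩⟩
  by_contra hab
  have := hii a b hab
  linarith
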